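/- Let A be a unital C*-algebra and let N₁, N₂ ∈ A be normal elements with N₂ in the closure of the similarity orbit of N₁. Then spectrum(N₁) ⊆ spectrum(N₂). -/
import Mathlib

/-- If a normal element `N₂` lies in the norm closure of the similarity orbit of a normal
element `N₁` in a unital C*-algebra, then `spectrum N₁ ⊆ spectrum N₂`. -/
theorem stmt11 {A : Type*} [NormedRing A] [StarRing A] [CStarRing A] [CompleteSpace A]
    [NormedAlgebra ℂ A] [StarModule ℂ A]
    (N₁ N₂ : A) (hN₁ : IsStarNormal N₁) (hN₂ : IsStarNormal N₂)
    (h : N₂ ∈ closure {x : A | ∃ V : Aˣ, x = ↑V * N₁ * ↑V⁻¹}) :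
    spectrum ℂ N₁ ⊆ spectrum ℂ N₂ := by
  intro lam hlam
  by_contra hlam2
  have hunit : IsUnit (algebraMap ℂ A lam - N₂) := not_not.mp hlam2
  have hopen : IsOpen {x : A | IsUnit (algebraMap ℂ A lam - x)} :=
    Units.isOpen.preimage (continuous_const.sub continuous_id)
  obtain ⟨x, hx1, hx2⟩ :=
    (_root_.mem_closure_iff.mp h) _ hopen hunit
  obtain ⟨V, rfl⟩ := hx2
  have : lam ∈ spectrum ℂ ((V : A) * N₁ * ↑V⁻¹) := by
    rw [spectrum.units_conjugate]; exact hlam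
  exact this hx1
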